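/- arXiv:2112.03697 — 2 statements merged into one kernel-verified Lean document; each statement's English description precedes it below -/
import Mathlib

section
/- Let L > 0, let n be a natural number, and let 0 < a < L/2. Then there exist constants C > 0 and δ₀ > 0 such that for all δ ∈ (0, δ₀) and all x ∈ [−a, a], one has |A_δ[y ↦ yⁿ](x) − xⁿ/2| ≤ C·δ. -/
open MeasureTheory Filter Real


lemma my_arctan_le_self {t : ℝ} (ht : 0 ≤ t) : Real.arctan t ≤ t := by
  have h0 : 0 ≤ Real.arctan t := by
    rw [← Real.arctan_zero]; exact Real.arctan_strictMono.monotone ht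
  have h := Real.le_tan h0 (Real.arctan_lt_pi_div_two t)
  rwa [Real.tan_arctan] at h

lemma my_taylor2 (P : ℝ) (hP : 1 ≤ P) :
    ∀ n : ℕ, ∀ x y : ℝ, |x| ≤ P → |y| ≤ P →
      |y^n - x^n - n * x^(n-1) * (y-x)| ≤ n^2 * P^n * (y-x)^2 := by
  intro n
  induction n with
  | zero => intro x y hx hy; simp
  | succ m ih =>
    intro x y hx hy
    have hP0 : (0:ℝ) < P := lt_of_lt_of_le one_pos hP
    match m, ih with
    | 0, _ =>
      have : y^1 - x^1 - (1:ℕ) * x^(1-1) * (y-x) = 0 := by norm_num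
      rw [this, abs_zero]
      positivity
    | (k+1), ih =>
      have hxk : |x^k| ≤ P^k := by
        rw [abs_pow]; exact pow_le_pow_left₀ (abs_nonneg x) hx k
      have key : y^(k+2) - x^(k+2) - ((k+2:ℕ):ℝ) * x^((k+2)-1) * (y-x)
          = y * (y^(k+1) - x^(k+1) - ((k+1:ℕ):ℝ) * x^((k+1)-1) * (y-x))
            + ((k+1:ℕ):ℝ) * x^k * (y-x)^2 := by
        simp only [Nat.add_sub_cancel]
        push_cast
        ring
      calc |y^(k+2) - x^(k+2) - ((k+2:ℕ):ℝ) * x^((k+2)-1) * (y-x)|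
          ≤ |y| * |y^(k+1) - x^(k+1) - ((k+1:ℕ):ℝ) * x^((k+1)-1) * (y-x)|
            + ((k+1:ℕ):ℝ) * |x^k| * (y-x)^2 := by
            rw [key]
            refine (abs_add_le _ _).trans (le_of_eq ?_)
            rw [abs_mul, abs_mul, abs_mul,
              abs_of_nonneg (by positivity : (0:ℝ) ≤ ((k+1:ℕ):ℝ)),
              abs_of_nonneg (sq_nonneg (y-x))]
        _ ≤ P * (((k+1:ℕ):ℝ)^2 * P^(k+1) * (y-x)^2) + ((k+1:ℕ):ℝ) * P^k * (y-x)^2 := by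
            have h1 := ih x y hx hy
            have t1 := mul_le_mul hy h1 (abs_nonneg _) hP0.le
            have t2 := mul_le_mul_of_nonneg_right
              (mul_le_mul_of_nonneg_left hxk (by positivity : (0:ℝ) ≤ ((k+1:ℕ):ℝ)))
              (sq_nonneg (y-x))
            exact add_le_add t1 t2
        _ ≤ ((k+2:ℕ):ℝ)^2 * P^(k+2) * (y-x)^2 := by
            have h1 : (1:ℝ) ≤ P^2 := one_le_pow₀ hP
            have hPk : (0:ℝ) < P^k := pow_pos hP0 k
            have e1 : P * (((k+1:ℕ):ℝ)^2 * P^(k+1) * (y-x)^2)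
                = ((k+1:ℝ))^2 * (P^(k+2) * (y-x)^2) := by push_cast; ring
            have e2 : ((k+1:ℕ):ℝ) * P^k * (y-x)^2
                = ((k+1:ℝ)) * (P^k * (y-x)^2) := by push_cast; ring
            rw [e1, e2]
            have h3 : P^k * (y-x)^2 ≤ P^(k+2) * (y-x)^2 := by
              have : P^k ≤ P^(k+2) := pow_le_pow_right₀ hP (by omega)
              gcongr
            have h4 : ((k+1:ℝ)) * (P^k * (y-x)^2) ≤ ((k+1:ℝ)) * (P^(k+2) * (y-x)^2) :=
              mul_le_mul_of_nonneg_left h3 (by positivity)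
            push_cast
            nlinarith [sq_nonneg (y-x), hPk.le, mul_nonneg (pow_pos hP0 (k+2)).le (sq_nonneg (y-x))]

lemma cont_den (x δ : ℝ) (hδ : 0 < δ) :
    Continuous (fun y : ℝ => (x - y)^2 + 4*δ^2) := by continuity

lemma den_pos (x δ : ℝ) (hδ : 0 < δ) (y : ℝ) : 0 < (x - y)^2 + 4*δ^2 := by positivity

lemma integral_f0 (M x δ : ℝ) (hδ : 0 < δ) :
    ∫ y in (-M)..M, δ/((x - y)^2 + 4*δ^2)
      = (1/2) * Real.arctan ((M - x)/(2*δ)) + (1/2) * Real.arctan ((M + x)/(2*δ)) := by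
  have h2δ : (2*δ) ≠ 0 := by positivity
  have hderiv : ∀ y ∈ Set.uIcc (-M) M,
      HasDerivAt (fun y : ℝ => (1/2) * Real.arctan ((y - x)/(2*δ)))
        (δ/((x - y)^2 + 4*δ^2)) y := by
    intro y _
    have h1 : HasDerivAt (fun y : ℝ => (y - x)/(2*δ)) (1/(2*δ)) y := by
      simpa using ((hasDerivAt_id y).sub_const x).div_const (2*δ)
    have h2 := (Real.hasDerivAt_arctan ((y - x)/(2*δ))).comp y h1
    have h3 := h2.const_mul (1/2 : ℝ)
    refine h3.congr_deriv ?_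
    have hden : (0:ℝ) < 1 + ((y - x)/(2*δ))^2 := by positivity
    field_simp
    ring
  have hint : IntervalIntegrable (fun y : ℝ => δ/((x - y)^2 + 4*δ^2))
      volume (-M) M := by
    apply Continuous.intervalIntegrable
    exact continuous_const.div (cont_den x δ hδ) (fun y => (den_pos x δ hδ y).ne')
  rw [intervalIntegral.integral_eq_sub_of_hasDerivAt hderiv hint]
  have : ((-M : ℝ) - x)/(2*δ) = -((M + x)/(2*δ)) := by ring
  rw [this, Real.arctan_neg]
  ring

lemma integral_f1 (M x δ : ℝ) (hδ : 0 < δ) :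
    ∫ y in (-M)..M, δ*(y - x)/((x - y)^2 + 4*δ^2)
      = (δ/2) * (Real.log ((M - x)^2 + 4*δ^2) - Real.log ((M + x)^2 + 4*δ^2)) := by
  have hderiv : ∀ y ∈ Set.uIcc (-M) M,
      HasDerivAt (fun y : ℝ => (δ/2) * Real.log ((y - x)^2 + 4*δ^2))
        (δ*(y - x)/((x - y)^2 + 4*δ^2)) y := by
    intro y _
    have h1 : HasDerivAt (fun y : ℝ => (y - x)^2 + 4*δ^2) (2*(y - x)) y := by
      have := (((hasDerivAt_id y).sub_const x).pow 2).add_const (4*δ^2)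
      simpa using this
    have hne : (y - x)^2 + 4*δ^2 ≠ 0 := by positivity
    have h2 := (h1.log hne).const_mul (δ/2 : ℝ)
    refine h2.congr_deriv ?_
    have hxy : (x - y)^2 = (y - x)^2 := by ring
    rw [hxy]
    field_simp
  have hint : IntervalIntegrable (fun y : ℝ => δ*(y - x)/((x - y)^2 + 4*δ^2))
      volume (-M) M := by
    apply Continuous.intervalIntegrable
    exact (continuous_const.mul (continuous_id.sub continuous_const)).div
      (cont_den x δ hδ) (fun y => (den_pos x δ hδ y).ne')
  rw [intervalIntegral.integral_eq_sub_of_hasDerivAt hderiv hint]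
  have e1 : ((-M:ℝ) - x)^2 = (M + x)^2 := by ring
  rw [e1]
  ring

set_option maxHeartbeats 1000000 in
/-- For `L > 0`, `n : ℕ` and `0 < a < L/2`, there are `C > 0` and `δ₀ > 0` such that for all
`δ ∈ (0, δ₀)` and all `x ∈ [−a, a]`, `|A_δ[y ↦ yⁿ](x) − xⁿ/2| ≤ C·δ`. -/
theorem adelta_pow_interior_rate (L : ℝ) (hL : 0 < L) (n : ℕ) (a : ℝ)
    (ha : 0 < a) (haL : a < L/2) :
    ∃ C > (0:ℝ), ∃ δ₀ > (0:ℝ), ∀ δ ∈ Set.Ioo (0:ℝ) δ₀, ∀ x ∈ Set.Icc (-a) a,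
      |(1/Real.pi) * (∫ y in (-(L/2))..(L/2), δ/((x - y)^2 + 4*δ^2) * y^n) - x^n/2|
        ≤ C * δ := by
  obtain ⟨M, hM⟩ : ∃ t : ℝ, t = L/2 := ⟨_, rfl⟩
  obtain ⟨ε, hε⟩ : ∃ t : ℝ, t = L/2 - a := ⟨_, rfl⟩
  have hε0 : 0 < ε := by linarith
  have hεM : ε ≤ M := by linarith
  have hM0 : 0 < M := by linarith
  obtain ⟨P, hP⟩ : ∃ t : ℝ, t = max M 1 := ⟨_, rfl⟩
  have hP1 : (1:ℝ) ≤ P := hP ▸ le_max_right _ _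
  have hMP : M ≤ P := hP ▸ le_max_left _ _
  have hP0 : (0:ℝ) < P := lt_of_lt_of_le one_pos hP1
  have hPn1 : (1:ℝ) ≤ P^n := one_le_pow₀ hP1
  obtain ⟨K, hK⟩ : ∃ t : ℝ, t = Real.log (2*L^2) - Real.log (ε^2) := ⟨_, rfl⟩
  have hK0 : 0 ≤ K := by
    have h1 : ε^2 ≤ 2*L^2 := by nlinarith
    have h2 := Real.log_le_log (by positivity) h1
    rw [hK]; linarith
  refine ⟨P^n * (2/ε) + n * P^n * (K/2) + n^2 * P^n * L, ?_, ε, hε0, ?_⟩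
  · have h1 : (0:ℝ) < P^n * (2/ε) := by positivity
    have h2 : (0:ℝ) ≤ (n:ℝ) * P^n * (K/2) := by positivity
    have h3 : (0:ℝ) ≤ (n:ℝ)^2 * P^n * L := by positivity
    push_cast
    linarith
  intro δ hδmem x hxmem
  obtain ⟨hδ0, hδε⟩ := hδmem
  obtain ⟨hx1, hx2⟩ := hxmem
  have hxa : |x| ≤ a := abs_le.mpr ⟨hx1, hx2⟩
  have hxP : |x| ≤ P := le_trans hxa (by linarith)
  have hMx1 : ε ≤ M - x := by
    have := le_of_abs_le hxa; linarith
  have hMx2 : ε ≤ M + x := by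
    have := neg_le_of_abs_le hxa; linarith
  have hδM : δ ≤ M := le_trans hδε.le hεM
  have hden := den_pos x δ hδ0
  have hcden := cont_den x δ hδ0
  obtain ⟨T0, hT0def⟩ : ∃ t : ℝ,
      t = (1/2) * Real.arctan ((M - x)/(2*δ)) + (1/2) * Real.arctan ((M + x)/(2*δ)) := ⟨_, rfl⟩
  obtain ⟨T1, hT1def⟩ : ∃ t : ℝ,
      t = (δ/2) * (Real.log ((M - x)^2 + 4*δ^2) - Real.log ((M + x)^2 + 4*δ^2)) := ⟨_, rfl⟩
  obtain ⟨J, hJdef⟩ : ∃ t : ℝ,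
      t = ∫ y in (-M)..M, δ*(y^n - x^n - n * x^(n-1) * (y - x))/((x - y)^2 + 4*δ^2) := ⟨_, rfl⟩
  -- bound on T0 - π/2
  have hT0bound : |T0 - π/2| ≤ 2*δ/ε := by
    have hA : (0:ℝ) < (M - x)/(2*δ) := div_pos (by linarith) (by linarith)
    have hB : (0:ℝ) < (M + x)/(2*δ) := div_pos (by linarith) (by linarith)
    have hAi : π/2 - Real.arctan ((M - x)/(2*δ)) ≤ 2*δ/(M - x) := by
      rw [← Real.arctan_inv_of_pos hA]
      refine (my_arctan_le_self (by positivity)).trans (le_of_eq ?_)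
      rw [inv_div]
    have hBi : π/2 - Real.arctan ((M + x)/(2*δ)) ≤ 2*δ/(M + x) := by
      rw [← Real.arctan_inv_of_pos hB]
      refine (my_arctan_le_self (by positivity)).trans (le_of_eq ?_)
      rw [inv_div]
    have hA2 : 2*δ/(M - x) ≤ 2*δ/ε :=
      div_le_div_of_nonneg_left (by linarith) hε0 hMx1
    have hB2 : 2*δ/(M + x) ≤ 2*δ/ε :=
      div_le_div_of_nonneg_left (by linarith) hε0 hMx2
    have hAu := (Real.arctan_lt_pi_div_two ((M - x)/(2*δ))).le
    have hBu := (Real.arctan_lt_pi_div_two ((M + x)/(2*δ))).le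
    rw [hT0def, abs_le]
    constructor <;> linarith
  -- bound on T1
  have hT1bound : |T1| ≤ δ * (K/2) := by
    have hxle := le_of_abs_le hxa
    have hxge := neg_le_of_abs_le hxa
    have h2 : 4*δ^2 ≤ L^2 := by nlinarith [hδM, hδ0.le, hM0.le]
    have hN1 : ε^2 ≤ (M - x)^2 + 4*δ^2 := by nlinarith [hMx1, hε0.le, sq_nonneg δ]
    have hN2 : (M - x)^2 + 4*δ^2 ≤ 2*L^2 := by
      have h1 : M - x ≤ L := by linarith
      nlinarith [hMx1, hε0.le]
    have hD1 : ε^2 ≤ (M + x)^2 + 4*δ^2 := by nlinarith [hMx2, hε0.le, sq_nonneg δ]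
    have hD2 : (M + x)^2 + 4*δ^2 ≤ 2*L^2 := by
      have h1 : M + x ≤ L := by linarith
      nlinarith [hMx2, hε0.le]
    have l1 := Real.log_le_log (by positivity : (0:ℝ) < (M - x)^2 + 4*δ^2) hN2
    have l2 := Real.log_le_log (by positivity : (0:ℝ) < ε^2) hN1
    have l3 := Real.log_le_log (by positivity : (0:ℝ) < (M + x)^2 + 4*δ^2) hD2
    have l4 := Real.log_le_log (by positivity : (0:ℝ) < ε^2) hD1
    have habs : |Real.log ((M - x)^2 + 4*δ^2) - Real.log ((M + x)^2 + 4*δ^2)| ≤ K := by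
      rw [hK, abs_le]; constructor <;> linarith
    calc |T1| = (δ/2) * |Real.log ((M - x)^2 + 4*δ^2) - Real.log ((M + x)^2 + 4*δ^2)| := by
          rw [hT1def, abs_mul, abs_of_nonneg (by positivity : (0:ℝ) ≤ δ/2)]
      _ ≤ (δ/2) * K := by
          exact mul_le_mul_of_nonneg_left habs (by positivity)
      _ = δ * (K/2) := by ring
  -- bound on the remainder integral J
  have hJbound : |J| ≤ (δ * ((n:ℝ)^2 * P^n)) * L := by
    have hpt : ∀ y ∈ Set.uIoc (-M) M,
        ‖δ*(y^n - x^n - n * x^(n-1) * (y - x))/((x - y)^2 + 4*δ^2)‖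
          ≤ δ * ((n:ℝ)^2 * P^n) := by
      intro y hy
      rw [Set.uIoc_of_le (by linarith : -M ≤ M)] at hy
      have hyP : |y| ≤ P := by
        rw [abs_le]; exact ⟨by linarith [hy.1], le_trans hy.2 hMP⟩
      have hR := my_taylor2 P hP1 n x y hxP hyP
      have hDge : (y - x)^2 ≤ (x - y)^2 + 4*δ^2 := by nlinarith
      have h1 : |y^n - x^n - n * x^(n-1) * (y - x)|
          ≤ (n:ℝ)^2 * P^n * ((x - y)^2 + 4*δ^2) := by
        refine hR.trans ?_
        exact mul_le_mul_of_nonneg_left hDge (by positivity)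
      rw [Real.norm_eq_abs, abs_div, abs_of_pos (hden y), abs_mul,
        abs_of_pos hδ0, div_le_iff₀ (hden y)]
      calc δ * |y^n - x^n - n * x^(n-1) * (y - x)|
          ≤ δ * ((n:ℝ)^2 * P^n * ((x - y)^2 + 4*δ^2)) :=
            mul_le_mul_of_nonneg_left h1 hδ0.le
        _ = δ * ((n:ℝ)^2 * P^n) * ((x - y)^2 + 4*δ^2) := by ring
    have := intervalIntegral.norm_integral_le_of_norm_le_const hpt
    have heq : |M - (-M)| = L := by
      rw [abs_of_pos (by linarith : (0:ℝ) < M - (-M)), hM]; ring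
    rw [← hJdef] at this
    rw [heq] at this
    exact this
  -- integrability of the three pieces
  have hint0 : IntervalIntegrable (fun y : ℝ => δ/((x - y)^2 + 4*δ^2)) volume (-M) M :=
    (continuous_const.div hcden (fun y => (hden y).ne')).intervalIntegrable _ _
  have hint1 : IntervalIntegrable (fun y : ℝ => δ*(y - x)/((x - y)^2 + 4*δ^2)) volume (-M) M :=
    ((continuous_const.mul (continuous_id.sub continuous_const)).div hcden
      (fun y => (hden y).ne')).intervalIntegrable _ _
  have hcg : Continuous (fun y : ℝ =>
      δ*(y^n - x^n - n * x^(n-1) * (y - x))/((x - y)^2 + 4*δ^2)) := by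
    apply Continuous.div _ hcden (fun y => (hden y).ne')
    continuity
  have hintg : IntervalIntegrable (fun y : ℝ =>
      δ*(y^n - x^n - n * x^(n-1) * (y - x))/((x - y)^2 + 4*δ^2)) volume (-M) M :=
    hcg.intervalIntegrable _ _
  -- splitting of the integral
  have hsplit : (∫ y in (-M)..M, δ/((x - y)^2 + 4*δ^2) * y^n)
      = x^n * T0 + ((n:ℝ) * x^(n-1)) * T1 + J := by
    have hfun : (fun y : ℝ => δ/((x - y)^2 + 4*δ^2) * y^n)
        = fun y : ℝ => x^n * (δ/((x - y)^2 + 4*δ^2))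
          + ((n:ℝ) * x^(n-1)) * (δ*(y - x)/((x - y)^2 + 4*δ^2))
          + δ*(y^n - x^n - n * x^(n-1) * (y - x))/((x - y)^2 + 4*δ^2) := by
      funext y
      have h := (hden y).ne'
      field_simp
      ring
    rw [hfun, intervalIntegral.integral_add (((hint0.const_mul _).add
      (hint1.const_mul _))) hintg,
      intervalIntegral.integral_add (hint0.const_mul _) (hint1.const_mul _),
      intervalIntegral.integral_const_mul, intervalIntegral.integral_const_mul,
      integral_f0 M x δ hδ0, integral_f1 M x δ hδ0, ← hT0def, ← hT1def, ← hJdef]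
  -- assemble
  have hπ : (0:ℝ) < π := Real.pi_pos
  have hπ1 : 1/π ≤ 1 := by
    rw [div_le_one hπ]; linarith [Real.pi_gt_three]
  have key : (1/π) * (x^n * T0 + ((n:ℝ) * x^(n-1)) * T1 + J) - x^n/2
      = (1/π) * (x^n * (T0 - π/2)) + (1/π) * (((n:ℝ) * x^(n-1)) * T1) + (1/π) * J := by
    field_simp
    ring
  rw [← hM, hsplit, key]
  have hxnP : |x|^n ≤ P^n := pow_le_pow_left₀ (abs_nonneg x) hxP n
  have hxn1P : |x|^(n-1) ≤ P^n :=
    le_trans (pow_le_pow_left₀ (abs_nonneg x) hxP (n-1)) (pow_le_pow_right₀ hP1 (Nat.sub_le n 1))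
  have b1 : |(1/π) * (x^n * (T0 - π/2))| ≤ P^n * (2*δ/ε) := by
    rw [abs_mul, abs_mul, abs_pow, abs_of_pos (by positivity : (0:ℝ) < 1/π)]
    calc (1/π) * (|x|^n * |T0 - π/2|) ≤ 1 * (P^n * (2*δ/ε)) :=
          mul_le_mul hπ1 (mul_le_mul hxnP hT0bound (abs_nonneg _) (by positivity))
            (by positivity) one_pos.le
      _ = P^n * (2*δ/ε) := one_mul _
  have b2 : |(1/π) * (((n:ℝ) * x^(n-1)) * T1)| ≤ ((n:ℝ) * P^n) * (δ * (K/2)) := by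
    rw [abs_mul, abs_mul, abs_mul, abs_pow, Nat.abs_cast,
      abs_of_pos (by positivity : (0:ℝ) < 1/π)]
    calc (1/π) * (((n:ℝ) * |x|^(n-1)) * |T1|) ≤ 1 * (((n:ℝ) * P^n) * (δ * (K/2))) := by
          refine mul_le_mul hπ1 ?_ (by positivity) one_pos.le
          exact mul_le_mul (mul_le_mul_of_nonneg_left hxn1P (Nat.cast_nonneg n)) hT1bound
            (abs_nonneg _) (by positivity)
      _ = ((n:ℝ) * P^n) * (δ * (K/2)) := one_mul _
  have b3 : |(1/π) * J| ≤ (δ * ((n:ℝ)^2 * P^n)) * L := by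
    rw [abs_mul, abs_of_pos (by positivity : (0:ℝ) < 1/π)]
    calc (1/π) * |J| ≤ 1 * ((δ * ((n:ℝ)^2 * P^n)) * L) :=
          mul_le_mul hπ1 hJbound (abs_nonneg _) one_pos.le
      _ = (δ * ((n:ℝ)^2 * P^n)) * L := one_mul _
  calc |(1/π) * (x^n * (T0 - π/2)) + (1/π) * (((n:ℝ) * x^(n-1)) * T1) + (1/π) * J|
      ≤ |(1/π) * (x^n * (T0 - π/2))| + |(1/π) * (((n:ℝ) * x^(n-1)) * T1)| + |(1/π) * J| :=
        abs_add_three _ _ _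
    _ ≤ P^n * (2*δ/ε) + ((n:ℝ) * P^n) * (δ * (K/2)) + (δ * ((n:ℝ)^2 * P^n)) * L :=
        add_le_add (add_le_add b1 b2) b3
    _ = (P^n * (2/ε) + (n:ℕ) * P^n * (K/2) + (n:ℕ)^2 * P^n * L) * δ := by
        push_cast; ring
end

section
/- Let L > 0, let n be a natural number, and let ε ∈ (0, 1). Then there exist constants C > 0 and δ₀ ∈ (0, 1) such that for all δ ∈ (0, δ₀) and all x ∈ ℝ with |x| ≤ L/2 − δ^ε, one has |A_δ[y ↦ yⁿ](x) − xⁿ/2| ≤ C·δ^{1−ε}. -/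
open MeasureTheory Filter Real intervalIntegral

lemma my_arctan_le_self_s2 {x : ℝ} (hx : 0 ≤ x) : Real.arctan x ≤ x := by
  rcases lt_or_ge x (π/2) with h | h
  · calc Real.arctan x ≤ Real.arctan (Real.tan x) := by
          exact Real.arctan_strictMono.monotone (Real.le_tan hx h)
      _ = x := Real.arctan_tan (by linarith [Real.pi_pos]) h
  · exact le_trans (Real.arctan_lt_pi_div_two x).le h

lemma my_pi_half_sub_arctan {u : ℝ} (hu : 0 < u) : π/2 - Real.arctan u ≤ 1/u := by
  have h := Real.arctan_inv_of_pos hu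
  have h2 : Real.arctan u⁻¹ ≤ u⁻¹ := my_arctan_le_self_s2 (by positivity)
  rw [one_div]
  linarith

lemma my_abs_rpow_intIntegrable {r : ℝ} (hr : -1 < r) (a b : ℝ) :
    IntervalIntegrable (fun t : ℝ => |t| ^ r) volume a b := by
  have key : ∀ c : ℝ, IntervalIntegrable (fun t : ℝ => |t| ^ r) volume 0 c := by
    have pos : ∀ c : ℝ, 0 ≤ c → IntervalIntegrable (fun t : ℝ => |t| ^ r) volume 0 c := by
      intro c hc
      apply (intervalIntegral.intervalIntegrable_rpow' hr (a := 0) (b := c)).congr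
      intro t ht
      rw [Set.uIoc_of_le hc] at ht
      show t ^ r = |t| ^ r
      rw [abs_of_pos ht.1]
    intro c
    rcases le_or_gt 0 c with h | h
    · exact pos c h
    · have h1 := pos (-c) (by linarith)
      have h2 := (IntervalIntegrable.iff_comp_neg (f := fun t : ℝ => |t| ^ r)).mp h1
      simp only [abs_neg, neg_neg, neg_zero] at h2
      exact h2
  exact (key a).symm.trans (key b)

lemma my_abs_pow_sub_pow_le {x y D : ℝ} (n : ℕ) (hx : |x| ≤ D) (hy : |y| ≤ D) :
    |y ^ n - x ^ n| ≤ n * D ^ (n - 1) * |y - x| := by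
  have hD : 0 ≤ D := le_trans (abs_nonneg x) hx
  rw [← geom_sum₂_mul, abs_mul]
  apply mul_le_mul_of_nonneg_right _ (abs_nonneg _)
  calc |∑ i ∈ Finset.range n, y ^ i * x ^ (n - 1 - i)|
      ≤ ∑ i ∈ Finset.range n, |y ^ i * x ^ (n - 1 - i)| := Finset.abs_sum_le_sum_abs _ _
    _ ≤ ∑ i ∈ Finset.range n, D ^ (n - 1) := by
        apply Finset.sum_le_sum
        intro i hi
        rw [abs_mul, abs_pow, abs_pow]
        calc |y| ^ i * |x| ^ (n - 1 - i) ≤ D ^ i * D ^ (n - 1 - i) := by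
              exact mul_le_mul (pow_le_pow_left₀ (abs_nonneg y) hy i)
                (pow_le_pow_left₀ (abs_nonneg x) hx _) (by positivity) (by positivity)
          _ = D ^ (n - 1) := by
              rw [← pow_add]
              congr 1
              have := Finset.mem_range.mp hi
              omega
    _ = n * D ^ (n - 1) := by
        rw [Finset.sum_const, Finset.card_range, nsmul_eq_mul]

lemma my_kernel_ptwise {δ ε t : ℝ} (hδ : 0 < δ) (hε : 0 < ε) (hε1 : ε < 1) :
    δ * |t| / (t ^ 2 + 4 * δ ^ 2) ≤ δ ^ (1 - ε) * |t| ^ (ε - 1) := by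
  have hden : (0:ℝ) < t ^ 2 + 4 * δ ^ 2 := by positivity
  rcases eq_or_ne t 0 with rfl | ht
  · simp only [abs_zero, mul_zero, zero_div]
    positivity
  · have habs : 0 < |t| := abs_pos.mpr ht
    rw [div_le_iff₀ hden]
    have key : δ ^ ε * |t| ^ (2 - ε) ≤ t ^ 2 + 4 * δ ^ 2 := by
      have h := Real.geom_mean_le_arith_mean2_weighted
        (by linarith : (0:ℝ) ≤ ε/2) (by linarith : (0:ℝ) ≤ 1 - ε/2)
        (by positivity : (0:ℝ) ≤ δ^2) (by positivity : (0:ℝ) ≤ t^2) (by ring)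
      have e1 : (δ^2 : ℝ) ^ (ε/2 : ℝ) = δ ^ ε := by
        rw [← Real.rpow_natCast δ 2, ← Real.rpow_mul hδ.le]
        congr 1
        push_cast
        ring
      have e2 : (t^2 : ℝ) ^ ((1 : ℝ) - ε/2) = |t| ^ (2 - ε) := by
        rw [← sq_abs, ← Real.rpow_natCast |t| 2, ← Real.rpow_mul (abs_nonneg t)]
        congr 1
        push_cast
        ring
      rw [e1, e2] at h
      nlinarith [sq_nonneg t, sq_nonneg δ]
    calc δ * |t| = δ ^ (1 - ε) * |t| ^ (ε - 1) * (δ ^ ε * |t| ^ (2 - ε)) := by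
          rw [show δ ^ (1-ε) * |t| ^ (ε-1) * (δ ^ ε * |t| ^ (2-ε))
              = (δ ^ (1-ε) * δ ^ ε) * (|t| ^ (ε-1) * |t| ^ (2-ε)) by ring,
            ← Real.rpow_add hδ, ← Real.rpow_add habs]
          norm_num
      _ ≤ δ ^ (1 - ε) * |t| ^ (ε - 1) * (t ^ 2 + 4 * δ ^ 2) := by
          apply mul_le_mul_of_nonneg_left key (by positivity)

lemma my_kernel_cont {x δ : ℝ} (hδ : 0 < δ) :
    Continuous (fun y : ℝ => δ / ((x - y) ^ 2 + 4 * δ ^ 2)) := by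
  apply continuous_const.div (by continuity)
  intro y
  positivity

lemma my_kernel_integral (x a b δ : ℝ) (hδ : 0 < δ) :
    ∫ y in a..b, δ / ((x - y) ^ 2 + 4 * δ ^ 2)
      = (1/2) * Real.arctan ((b - x)/(2*δ)) - (1/2) * Real.arctan ((a - x)/(2*δ)) := by
  have h2δ : (2*δ) ≠ 0 := by positivity
  apply intervalIntegral.integral_eq_sub_of_hasDerivAt
  · intro y _
    have h1 : HasDerivAt (fun y : ℝ => (y - x)/(2*δ)) (1/(2*δ)) y := by
      simpa using ((hasDerivAt_id y).sub_const x).div_const (2*δ)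
    have h2 := (Real.hasDerivAt_arctan ((y - x)/(2*δ))).comp y h1
    have h3 := h2.const_mul (1/2 : ℝ)
    convert h3 using 1
    · rfl
    · rfl
    have hden : ((x - y) ^ 2 + 4 * δ ^ 2) ≠ 0 := by positivity
    have hden2 : (1 + ((y - x)/(2*δ)) ^ 2) ≠ 0 := by positivity
    field_simp
    ring
  · exact (my_kernel_cont hδ).intervalIntegrable a b

lemma my_int_abs_rpow_pos {ε : ℝ} (hε : 0 < ε) (hε1 : ε < 1) {c : ℝ} (hc : 0 ≤ c) :
    ∫ t in (0:ℝ)..c, |t| ^ (ε - 1) = c ^ ε / ε := by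
  rw [intervalIntegral.integral_congr (g := fun t : ℝ => t ^ (ε - 1))
      (fun t ht => by rw [Set.uIcc_of_le hc] at ht; rw [abs_of_nonneg ht.1]),
    integral_rpow (Or.inl (by linarith))]
  rw [Real.zero_rpow (by linarith : ε - 1 + 1 ≠ 0)]
  norm_num

lemma my_int_abs_rpow {ε : ℝ} (hε : 0 < ε) (hε1 : ε < 1) {a b : ℝ} (ha : a ≤ 0) (hb : 0 ≤ b) :
    ∫ t in a..b, |t| ^ (ε - 1) = ((-a) ^ ε + b ^ ε) / ε := by
  rw [← intervalIntegral.integral_add_adjacent_intervals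
      (my_abs_rpow_intIntegrable (by linarith) a 0) (my_abs_rpow_intIntegrable (by linarith) 0 b)]
  have h1 : ∫ t in a..(0:ℝ), |t| ^ (ε - 1) = (-a) ^ ε / ε := by
    have := intervalIntegral.integral_comp_neg (a := (0:ℝ)) (b := -a)
      (fun t : ℝ => |t| ^ (ε - 1))
    simp only [abs_neg, neg_neg, neg_zero] at this
    rw [← this, my_int_abs_rpow_pos hε hε1 (by linarith)]
  rw [h1, my_int_abs_rpow_pos hε hε1 hb]
  ring

lemma my_rpow_le_max {c L ε : ℝ} (hc : 0 ≤ c) (hcL : c ≤ L) (hε : 0 < ε) (hε1 : ε ≤ 1) :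
    c ^ ε ≤ max L 1 := by
  rcases le_or_gt c 1 with h | h
  · exact le_trans (Real.rpow_le_one hc h hε.le) (le_max_right L 1)
  · calc c ^ ε ≤ c ^ (1:ℝ) := Real.rpow_le_rpow_of_exponent_le h.le hε1
      _ = c := Real.rpow_one c
      _ ≤ max L 1 := le_trans hcL (le_max_left L 1)

/-- For `L > 0`, `n : ℕ` and `ε ∈ (0,1)`, there are `C > 0` and `δ₀ ∈ (0,1)` such that for all
`δ ∈ (0, δ₀)` and all real `x` with `|x| ≤ L/2 − δ^ε`,
`|A_δ[y ↦ yⁿ](x) − xⁿ/2| ≤ C·δ^{1−ε}`. -/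
theorem adelta_pow_rate_near_ends (L : ℝ) (hL : 0 < L) (n : ℕ) (ε : ℝ)
    (hε : ε ∈ Set.Ioo (0:ℝ) 1) :
    ∃ C > (0:ℝ), ∃ δ₀ ∈ Set.Ioo (0:ℝ) 1, ∀ δ ∈ Set.Ioo (0:ℝ) δ₀, ∀ x : ℝ,
      |x| ≤ L/2 - δ ^ ε →
      |(1/Real.pi) * (∫ y in (-(L/2))..(L/2), δ/((x - y)^2 + 4*δ^2) * y^n) - x^n/2|
        ≤ C * δ ^ (1 - ε) := by
  obtain ⟨hε0, hε1⟩ := hε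
  have hπ : (0:ℝ) < π := Real.pi_pos
  have hD : (0:ℝ) < L/2 := by linarith
  set D : ℝ := L/2 with hDdef
  set M : ℝ := n * D ^ (n - 1) with hMdef
  have hM0 : 0 ≤ M := by positivity
  refine ⟨M * 2 * max L 1 / (π * ε) + 2 * D ^ n / π, ?_, 1/2, by norm_num, ?_⟩
  · apply add_pos_of_nonneg_of_pos
    · apply div_nonneg _ (by positivity)
      have : (0:ℝ) ≤ max L 1 := le_trans zero_le_one (le_max_right L 1)
      positivity
    · positivity
  intro δ hδ x hx
  obtain ⟨hδ0, hδhalf⟩ := hδ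
  have hδε : (0:ℝ) < δ ^ ε := Real.rpow_pos_of_pos hδ0 ε
  have hδ1ε : (0:ℝ) < δ ^ (1 - ε) := Real.rpow_pos_of_pos hδ0 _
  have hxD : |x| ≤ D := le_trans hx (by linarith)
  obtain ⟨hxl, hxr⟩ := abs_le.mp hxD
  have hd1 : δ ^ ε ≤ D - x := by have := (abs_le.mp hx).2; linarith
  have hd2 : δ ^ ε ≤ D + x := by have := (abs_le.mp hx).1; linarith
  -- continuity and integrability
  have hKc : Continuous (fun y : ℝ => δ / ((x - y) ^ 2 + 4 * δ ^ 2)) := my_kernel_cont hδ0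
  have hKint : IntervalIntegrable (fun y : ℝ => δ / ((x - y) ^ 2 + 4 * δ ^ 2)) volume (-D) D :=
    hKc.intervalIntegrable _ _
  have hKnint : IntervalIntegrable
      (fun y : ℝ => δ / ((x - y) ^ 2 + 4 * δ ^ 2) * y ^ n) volume (-D) D :=
    (hKc.mul (continuous_pow n)).intervalIntegrable _ _
  -- value of the kernel integral
  have hI0 : ∫ y in (-D)..D, δ / ((x - y) ^ 2 + 4 * δ ^ 2)
      = (1/2) * Real.arctan ((D - x)/(2*δ)) + (1/2) * Real.arctan ((D + x)/(2*δ)) := by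
    rw [my_kernel_integral x (-D) D δ hδ0,
      show (-D - x)/(2*δ) = -((D + x)/(2*δ)) by ring, Real.arctan_neg]
    ring
  -- estimate of the kernel integral
  have hu1 : 0 < (D - x)/(2*δ) := div_pos (lt_of_lt_of_le hδε hd1) (by linarith)
  have hu2 : 0 < (D + x)/(2*δ) := div_pos (lt_of_lt_of_le hδε hd2) (by linarith)
  have harcbound : ∀ c : ℝ, δ ^ ε ≤ c →
      π/2 - Real.arctan (c/(2*δ)) ≤ 2 * δ ^ (1 - ε) := by
    intro c hc
    have hc0 : 0 < c := lt_of_lt_of_le hδε hc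
    have hu : 0 < c/(2*δ) := div_pos hc0 (by linarith)
    have h := my_pi_half_sub_arctan hu
    have h2 : 1 / (c/(2*δ)) = 2*δ/c := by
      field_simp
    have h3 : 2*δ/c ≤ 2*δ/(δ ^ ε) := by gcongr
    have h4 : 2*δ/(δ ^ ε) = 2 * δ ^ (1 - ε) := by
      rw [Real.rpow_sub hδ0, Real.rpow_one]
      ring
    rw [h2] at h
    linarith
  have hI0est : |(∫ y in (-D)..D, δ / ((x - y) ^ 2 + 4 * δ ^ 2)) - π/2| ≤ 2 * δ ^ (1 - ε) := by
    rw [hI0, abs_le]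
    have h1 := harcbound _ hd1
    have h2 := harcbound _ hd2
    have h3 := Real.arctan_lt_pi_div_two ((D - x)/(2*δ))
    have h4 := Real.arctan_lt_pi_div_two ((D + x)/(2*δ))
    constructor <;> nlinarith
  -- splitting
  have hKxnint : IntervalIntegrable
      (fun y : ℝ => x ^ n * (δ / ((x - y) ^ 2 + 4 * δ ^ 2))) volume (-D) D :=
    hKint.const_mul _
  have key : ∫ y in (-D)..D, δ / ((x - y) ^ 2 + 4 * δ ^ 2) * (y ^ n - x ^ n)
      = (∫ y in (-D)..D, δ / ((x - y) ^ 2 + 4 * δ ^ 2) * y ^ n)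
        - x ^ n * ∫ y in (-D)..D, δ / ((x - y) ^ 2 + 4 * δ ^ 2) := by
    rw [← intervalIntegral.integral_const_mul, ← intervalIntegral.integral_sub hKnint hKxnint]
    apply intervalIntegral.integral_congr
    intro y _
    ring
  -- bound for the difference term
  have hgint : IntervalIntegrable (fun y : ℝ => δ ^ (1-ε) * M * |x - y| ^ (ε - 1))
      volume (-D) D := by
    have h1 := (my_abs_rpow_intIntegrable (by linarith : (-1:ℝ) < ε - 1)
      (x + D) (x - D)).comp_sub_left x
    rw [show x - (x + D) = -D by ring, show x - (x - D) = D by ring] at h1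
    exact h1.const_mul _
  have hgval : ∫ y in (-D)..D, |x - y| ^ (ε - 1) = ((D - x) ^ ε + (x + D) ^ ε) / ε := by
    have h1 := intervalIntegral.integral_comp_sub_left (a := -D) (b := D)
      (fun t : ℝ => |t| ^ (ε - 1)) x
    rw [show x - -D = x + D by ring] at h1
    rw [h1, my_int_abs_rpow hε0 hε1 (by linarith : x - D ≤ 0) (by linarith : 0 ≤ x + D),
      show -(x - D) = D - x by ring]
  have hterm1 : |∫ y in (-D)..D, δ / ((x - y) ^ 2 + 4 * δ ^ 2) * (y ^ n - x ^ n)|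
      ≤ δ ^ (1-ε) * M * (2 * max L 1 / ε) := by
    have hb := intervalIntegral.norm_integral_le_abs_of_norm_le (μ := volume)
      (f := fun y : ℝ => δ / ((x - y) ^ 2 + 4 * δ ^ 2) * (y ^ n - x ^ n))
      (g := fun y : ℝ => δ ^ (1-ε) * M * |x - y| ^ (ε - 1)) (a := -D) (b := D) ?_ hgint
    · have hval : ∫ y in (-D)..D, δ ^ (1-ε) * M * |x - y| ^ (ε - 1)
          = δ ^ (1-ε) * M * (((D - x) ^ ε + (x + D) ^ ε) / ε) := by
        rw [intervalIntegral.integral_const_mul, hgval]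
      have hnn : 0 ≤ δ ^ (1-ε) * M * (((D - x) ^ ε + (x + D) ^ ε) / ε) := by
        have : (0:ℝ) ≤ (D - x) ^ ε := Real.rpow_nonneg (by linarith) _
        have : (0:ℝ) ≤ (x + D) ^ ε := Real.rpow_nonneg (by linarith) _
        positivity
      rw [hval, abs_of_nonneg hnn] at hb
      refine le_trans hb ?_
      have hb1 : (D - x) ^ ε ≤ max L 1 := my_rpow_le_max (by linarith) (by linarith) hε0 hε1.le
      have hb2 : (x + D) ^ ε ≤ max L 1 := my_rpow_le_max (by linarith) (by linarith) hε0 hε1.le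
      gcongr
      linarith
    · filter_upwards [ae_restrict_mem measurableSet_uIoc] with y hy
      rw [Set.uIoc_of_le (by linarith : -D ≤ D)] at hy
      have hyD : |y| ≤ D := abs_le.mpr ⟨hy.1.le, hy.2⟩
      have hden : (0:ℝ) < (x - y) ^ 2 + 4 * δ ^ 2 := by positivity
      calc ‖δ / ((x - y) ^ 2 + 4 * δ ^ 2) * (y ^ n - x ^ n)‖
          = δ / ((x - y) ^ 2 + 4 * δ ^ 2) * |y ^ n - x ^ n| := by
            rw [Real.norm_eq_abs, abs_mul, abs_of_nonneg (by positivity :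
              (0:ℝ) ≤ δ / ((x - y) ^ 2 + 4 * δ ^ 2))]
        _ ≤ δ / ((x - y) ^ 2 + 4 * δ ^ 2) * (M * |y - x|) := by
            apply mul_le_mul_of_nonneg_left _ (by positivity)
            exact my_abs_pow_sub_pow_le n hxD hyD
        _ = M * (δ * |x - y| / ((x - y) ^ 2 + 4 * δ ^ 2)) := by
            rw [abs_sub_comm]
            ring
        _ ≤ M * (δ ^ (1-ε) * |x - y| ^ (ε - 1)) :=
            mul_le_mul_of_nonneg_left (my_kernel_ptwise hδ0 hε0 hε1) hM0
        _ = δ ^ (1-ε) * M * |x - y| ^ (ε - 1) := by ring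
  -- final assembly
  set T : ℝ := ∫ y in (-D)..D, δ / ((x - y) ^ 2 + 4 * δ ^ 2) * (y ^ n - x ^ n) with hTdef
  set I0 : ℝ := ∫ y in (-D)..D, δ / ((x - y) ^ 2 + 4 * δ ^ 2) with hI0def
  have hxn : |x| ^ n ≤ D ^ n := pow_le_pow_left₀ (abs_nonneg x) hxD n
  have hsplit : (1/π) * (∫ y in (-D)..D, δ / ((x - y) ^ 2 + 4 * δ ^ 2) * y ^ n) - x ^ n / 2
      = (1/π) * T + (x ^ n / π) * (I0 - π/2) := by
    rw [key]
    field_simp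
    ring
  rw [hsplit]
  calc |(1/π) * T + (x ^ n / π) * (I0 - π/2)|
      ≤ |(1/π) * T| + |(x ^ n / π) * (I0 - π/2)| := abs_add_le _ _
    _ = (1/π) * |T| + (|x| ^ n / π) * |I0 - π/2| := by
        rw [abs_mul, abs_mul, abs_of_pos (show (0:ℝ) < 1/π by positivity), abs_div,
          abs_pow, abs_of_pos hπ]
    _ ≤ (1/π) * (δ ^ (1-ε) * M * (2 * max L 1 / ε)) + (D ^ n / π) * (2 * δ ^ (1-ε)) := by
        apply add_le_add
        · exact mul_le_mul_of_nonneg_left hterm1 (by positivity)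
        · apply mul_le_mul _ hI0est (abs_nonneg _) (by positivity)
          gcongr
    _ = (M * 2 * max L 1 / (π * ε) + 2 * D ^ n / π) * δ ^ (1 - ε) := by
        ring
end
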